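/- A set B ⊆ ℝ is a Burstin basis (i.e., B is simultaneously a Hamel basis and a Bernstein set) if and only if B is a Hamel basis and B ∩ P ≠ ∅ for every nonempty perfect set P ⊆ ℝ. In particular, if B is a Hamel basis which meets every nonempty perfect subset of ℝ, then also P \ B ≠ ∅ for every nonempty perfect P ⊆ ℝ. -/
import Mathlib


/-- `B` is a Hamel basis: a basis of `ℝ` as a vector space over `ℚ`. -/
def IsHamelBasis (B : Set ℝ) : Prop :=
  LinearIndependent ℚ ((↑) : B → ℝ) ∧ Submodule.span ℚ B = ⊤

/-- `B` is a Bernstein set: it meets every nonempty perfect set and misses a point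
of every nonempty perfect set. -/
def IsBernsteinSet (B : Set ℝ) : Prop :=
  ∀ P : Set ℝ, Perfect P → P.Nonempty → (B ∩ P).Nonempty ∧ (P \ B).Nonempty

lemma perfect_half_image {P : Set ℝ} (hP : Perfect P) :
    Perfect ((fun x : ℝ => (2 : ℝ)⁻¹ * x) '' P) := by
  have h2 : (2 : ℝ)⁻¹ ≠ 0 := by norm_num
  have e : (fun x : ℝ => (2 : ℝ)⁻¹ * x) = (Homeomorph.mulLeft₀ (2:ℝ)⁻¹ h2) := rfl
  constructor
  · rw [e]
    exact (Homeomorph.mulLeft₀ (2:ℝ)⁻¹ h2).isClosedMap _ hP.closed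
  · rintro y ⟨x, hx, rfl⟩
    have := (hP.acc x hx).map (f := fun x : ℝ => (2 : ℝ)⁻¹ * x)
      (continuous_const.mul continuous_id).continuousAt
      (fun a b hab => by field_simp at hab; exact hab)
    rwa [Filter.map_principal] at this

lemma hamel_miss {B : Set ℝ} (hB : IsHamelBasis B)
    (hmeet : ∀ P : Set ℝ, Perfect P → P.Nonempty → (B ∩ P).Nonempty) :
    ∀ P : Set ℝ, Perfect P → P.Nonempty → (P \ B).Nonempty := by
  intro P hP hne
  by_contra h
  have hPB : P ⊆ B := by
    intro x hx
    by_contra hxB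
    exact h ⟨x, hx, hxB⟩
  obtain ⟨b, hbB, p, hpP, hbp⟩ := hmeet _ (perfect_half_image hP) (hne.image _)
  have hpB : p ∈ B := hPB hpP
  have hb0 : b ≠ 0 := hB.1.ne_zero ⟨b, hbB⟩
  have hbne : b ≠ p := by
    intro hEq
    apply hb0
    have : b = (2:ℝ)⁻¹ * b := by rw [hEq] at hbp ⊢; exact hbp.symm
    linarith
  have hne' : (⟨b, hbB⟩ : B) ≠ ⟨p, hpB⟩ := by simpa using hbne
  have := linearIndependent_iff'.mp hB.1 {⟨b, hbB⟩, ⟨p, hpB⟩}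
    (fun i => if i = ⟨b, hbB⟩ then (2 : ℚ) else -1) ?_ ⟨b, hbB⟩ (by simp)
  · simp at this
  · rw [Finset.sum_pair hne']
    simp only [if_pos rfl, if_neg hne'.symm]
    have hp : p = 2 * b := by rw [← hbp]; ring
    simp only [Rat.smul_def]
    rw [hp]
    push_cast
    ring

theorem burstin_basis_iff (B : Set ℝ) :
    ((IsHamelBasis B ∧ IsBernsteinSet B) ↔
      (IsHamelBasis B ∧ ∀ P : Set ℝ, Perfect P → P.Nonempty → (B ∩ P).Nonempty)) ∧
    (IsHamelBasis B → (∀ P : Set ℝ, Perfect P → P.Nonempty → (B ∩ P).Nonempty) →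
      ∀ P : Set ℝ, Perfect P → P.Nonempty → (P \ B).Nonempty) := by
  constructor
  · constructor
    · rintro ⟨hH, hBern⟩
      exact ⟨hH, fun P hP hne => (hBern P hP hne).1⟩
    · rintro ⟨hH, hmeet⟩
      exact ⟨hH, fun P hP hne => ⟨hmeet P hP hne, hamel_miss hH hmeet P hP hne⟩⟩
  · exact fun hH hmeet => hamel_miss hH hmeet
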